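/- For every X ∈ ℂ and every a ∈ ℂ^m, conj(Φ₀(X, a)) = Φ₀(conj(X), conj(a)), where conj(a) := (conj(a₁), …, conj(a_m)). -/

import Mathlib

open Complex Filter Real

noncomputable section

/-- The point `r e^{iθ}` in the complex plane. -/
def rayPt (r θ : ℝ) : ℂ := (r : ℂ) * Complex.exp (θ * Complex.I)

/-- The branch `X^s := exp(s(log r + iθ))` for `X = r e^{iθ}`. -/
def rayPow (r θ : ℝ) (s : ℂ) : ℂ := Complex.exp (s * ((Real.log r : ℂ) + θ * Complex.I))

/-- `ω := exp(2πi/(m+2))`. -/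
def om (m : ℕ) : ℂ := Complex.exp (2 * Real.pi * Complex.I / (m + 2))

/-- `ω^s := exp((2πi/(m+2)) s)`. -/
def omPow (m : ℕ) (s : ℂ) : ℂ := Complex.exp ((2 * Real.pi * Complex.I / (m + 2)) * s)

/-- The coefficients `b_n(a)` of the formal square root of `1 + a₁ x + ⋯ + a_m x^m`:
`b₀ = 1`, `b_n = (1/2)(a_n - ∑_{i=1}^{n-1} b_i b_{n-i})` (with `a_k = 0` for `k > m`). -/
def bcoef (m : ℕ) (a : Fin m → ℂ) : ℕ → ℂ
  | 0 => 1
  | n + 1 => (1 / 2) * ((if h : n < m then a ⟨n, h⟩ else 0) -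
      ∑ i ∈ (Finset.Ico 1 (n + 1)).attach,
        bcoef m a i.1 * bcoef m a (n + 1 - i.1))
decreasing_by
  all_goals
    have h1 := (Finset.mem_Ico.mp i.2).1
    have h2 := (Finset.mem_Ico.mp i.2).2
    omega

/-- `r_m(a) := -m/4` for odd `m`, `-m/4 - b_{1+m/2}(a)` for even `m`. -/
def rmC (m : ℕ) (a : Fin m → ℂ) : ℂ :=
  if m % 2 = 1 then -(m : ℂ) / 4 else -(m : ℂ) / 4 - bcoef m a (1 + m / 2)

/-- `S(X, a) = ∑_{k=0}^{⌊(m+1)/2⌋} (2 b_k(a)/(m+2-2k)) X^{(m+2-2k)/2}` at `X = r e^{iθ}`. -/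
def Sfun (m : ℕ) (a : Fin m → ℂ) (r θ : ℝ) : ℂ :=
  ∑ k ∈ Finset.range ((m + 1) / 2 + 1),
    (2 * bcoef m a k / ((m : ℂ) + 2 - 2 * (k : ℂ))) * rayPow r θ (((m : ℂ) + 2 - 2 * (k : ℂ)) / 2)

/-- The potential `X^m + a₁ X^{m-1} + ⋯ + a_m`. -/
def pot (m : ℕ) (a : Fin m → ℂ) (X : ℂ) : ℂ :=
  X ^ m + ∑ k : Fin m, a k * X ^ (m - 1 - (k : ℕ))

/-- `ω_k(a) := (ω^k a₁, ω^{2k} a₂, …, ω^{km} a_m)`. -/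
def omAct (m : ℕ) (k : ℤ) (a : Fin m → ℂ) : Fin m → ℂ :=
  fun j => om m ^ (k * (((j : ℕ) : ℤ) + 1)) * a j

/-- Sibuya's asymptotic characterization of the canonical solution of
`-Φ'' + (X^m + a₁X^{m-1} + ⋯ + a_m)Φ = 0`:
`Φ(re^{iθ}) (re^{iθ})^{-r_m(a)} e^{S(re^{iθ},a)} → 1` for every `|θ| < 3π/(m+2)`. -/
def SibAsymp (m : ℕ) (a : Fin m → ℂ) (Φ : ℂ → ℂ) : Prop :=
  ∀ θ : ℝ, |θ| < 3 * Real.pi / (m + 2) →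
    Filter.Tendsto
      (fun r : ℝ => Φ (rayPt r θ) * rayPow r θ (-(rmC m a)) * Complex.exp (Sfun m a r θ))
      Filter.atTop (nhds 1)

-- conj derivative lemma
lemma conj_hasDerivAt {f : ℂ → ℂ} {f' : ℂ} {x : ℂ}
    (hf : HasDerivAt f f' ((starRingEnd ℂ) x)) :
    HasDerivAt (fun z => (starRingEnd ℂ) (f ((starRingEnd ℂ) z))) ((starRingEnd ℂ) f') x := by
  rw [hasDerivAt_iff_tendsto_slope] at hf ⊢
  have hmap : Filter.Tendsto (fun z : ℂ => (starRingEnd ℂ) z) (nhdsWithin x {x}ᶜ)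
      (nhdsWithin ((starRingEnd ℂ) x) {(starRingEnd ℂ) x}ᶜ) := by
    apply Filter.Tendsto.inf
    · exact (Complex.continuous_conj.tendsto x)
    · refine Filter.tendsto_principal_principal.2 ?_
      intro z hz hc
      exact hz ((starRingEnd ℂ).injective hc)
  have h1 : Filter.Tendsto (fun z => (starRingEnd ℂ) (slope f ((starRingEnd ℂ) x) ((starRingEnd ℂ) z)))
      (nhdsWithin x {x}ᶜ) (nhds ((starRingEnd ℂ) f')) :=
    (Complex.continuous_conj.tendsto f').comp (hf.comp hmap)
  refine h1.congr (fun z => ?_)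
  simp only [slope_def_field]
  rw [← map_sub, ← map_sub, map_div₀, Complex.conj_conj]

lemma bcoef_conj (m : ℕ) (a : Fin m → ℂ) : ∀ n,
    bcoef m (fun j => (starRingEnd ℂ) (a j)) n = (starRingEnd ℂ) (bcoef m a n) := by
  intro n
  induction n using Nat.strong_induction_on with
  | _ n ih =>
    match n with
    | 0 => simp [bcoef]
    | Nat.succ n =>
      rw [bcoef, bcoef]
      rw [map_mul, map_sub]
      congr 1
      · simp [map_ofNat]
      congr 1
      · split <;> simp
      · rw [map_sum]
        refine Finset.sum_congr rfl (fun i hi => ?_)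
        have h1 := (Finset.mem_Ico.mp i.2).1
        have h2 := (Finset.mem_Ico.mp i.2).2
        rw [map_mul, ih i.1 (by omega), ih (n + 1 - i.1) (by omega)]

lemma rmC_conj (m : ℕ) (a : Fin m → ℂ) :
    rmC m (fun j => (starRingEnd ℂ) (a j)) = (starRingEnd ℂ) (rmC m a) := by
  unfold rmC
  split <;> simp [bcoef_conj, map_ofNat]

lemma pot_conj (m : ℕ) (a : Fin m → ℂ) (X : ℂ) :
    (starRingEnd ℂ) (pot m (fun j => (starRingEnd ℂ) (a j)) ((starRingEnd ℂ) X)) = pot m a X := by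
  simp [pot, map_sum]

lemma rayPt_zero (r : ℝ) : rayPt r 0 = (r : ℂ) := by
  simp [rayPt]

lemma rayPow_zero_conj (r : ℝ) (s : ℂ) :
    (starRingEnd ℂ) (rayPow r 0 s) = rayPow r 0 ((starRingEnd ℂ) s) := by
  rw [rayPow, rayPow, ← Complex.exp_conj]
  congr 1
  simp

lemma Sfun_zero_conj (m : ℕ) (a : Fin m → ℂ) (r : ℝ) :
    (starRingEnd ℂ) (Sfun m (fun j => (starRingEnd ℂ) (a j)) r 0) = Sfun m a r 0 := by
  rw [Sfun, Sfun, map_sum]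
  refine Finset.sum_congr rfl (fun k hk => ?_)
  rw [map_mul, rayPow_zero_conj]
  congr 1
  · rw [map_div₀, map_mul, bcoef_conj]
    simp [map_ofNat]
  · congr 1
    simp [map_ofNat]

lemma gen_lower (K : ℕ) (γ : ℕ → ℝ) (β q : ℝ) (hq : (3:ℝ)/2 ≤ q) (hγ : 0 < γ 0) :
    ∃ c > 0, ∃ T : ℝ, 1 ≤ T ∧ ∀ r : ℝ, T ≤ r →
      c * r ^ q ≤ β * Real.log r + ∑ k ∈ Finset.range (K + 1), γ k * r ^ (q - (k : ℝ)) := by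
  set D : ℝ := 2 * |β| + ∑ k ∈ Finset.range K, |γ (k + 1)| with hD
  have hD0 : 0 ≤ D := by
    apply add_nonneg
    · positivity
    · exact Finset.sum_nonneg fun k _ => abs_nonneg _
  refine ⟨γ 0 / 2, by positivity, max 1 (2 * (D + 1) / (γ 0)), le_max_left _ _, fun r hr => ?_⟩
  have hr1 : (1:ℝ) ≤ r := le_trans (le_max_left _ _) hr
  have hr0 : (0:ℝ) < r := lt_of_lt_of_le one_pos hr1
  have hlog0 : 0 ≤ Real.log r := Real.log_nonneg hr1
  -- log r ≤ 2 * r ^ (1/2)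
  have hlog : Real.log r ≤ 2 * r ^ ((1:ℝ)/2) := by
    have h1 : Real.log (Real.sqrt r) ≤ Real.sqrt r - 1 :=
      Real.log_le_sub_one_of_pos (Real.sqrt_pos.2 hr0)
    have h2 : Real.log (Real.sqrt r) = Real.log r / 2 := Real.log_sqrt hr0.le
    have h3 : Real.sqrt r = r ^ ((1:ℝ)/2) := Real.sqrt_eq_rpow r
    nlinarith [Real.sqrt_nonneg r]
  have hhalf : r ^ ((1:ℝ)/2) ≤ r ^ (q - 1) :=
    Real.rpow_le_rpow_of_exponent_le hr1 (by linarith)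
  -- β * log r ≥ -2|β| r^(q-1)
  have hbeta : -(2 * |β|) * r ^ (q - 1) ≤ β * Real.log r := by
    have h1 : -|β| * Real.log r ≤ β * Real.log r :=
      mul_le_mul_of_nonneg_right (neg_abs_le β) hlog0
    have h2 : -(2 * |β|) * r ^ (q - 1) ≤ -|β| * Real.log r := by
      have : |β| * Real.log r ≤ |β| * (2 * r ^ (q - 1)) := by
        apply mul_le_mul_of_nonneg_left _ (abs_nonneg β)
        calc Real.log r ≤ 2 * r ^ ((1:ℝ)/2) := hlog
        _ ≤ 2 * r ^ (q - 1) := by linarith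
      linarith
    linarith
  -- sum splitting
  rw [Finset.sum_range_succ']
  have hsum : -(∑ k ∈ Finset.range K, |γ (k + 1)|) * r ^ (q - 1)
      ≤ ∑ k ∈ Finset.range K, γ (k + 1) * r ^ (q - ((k:ℝ) + 1)) := by
    rw [neg_mul, Finset.sum_mul, ← Finset.sum_neg_distrib]
    apply Finset.sum_le_sum
    intro k _
    have he : r ^ (q - ((k:ℝ) + 1)) ≤ r ^ (q - 1) :=
      Real.rpow_le_rpow_of_exponent_le hr1 (by push_cast; linarith [Nat.cast_nonneg (α := ℝ) k])
    have hpos : (0:ℝ) ≤ r ^ (q - ((k:ℝ) + 1)) := (Real.rpow_pos_of_pos hr0 _).le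
    calc -(|γ (k+1)| * r ^ (q - 1)) ≤ -|γ (k+1)| * r ^ (q - ((k:ℝ)+1)) := by
          rcases le_or_gt 0 (γ (k+1)) with h | h
          · nlinarith [abs_nonneg (γ (k+1))]
          · nlinarith [abs_nonneg (γ (k+1))]
      _ ≤ γ (k+1) * r ^ (q - ((k:ℝ)+1)) := mul_le_mul_of_nonneg_right (neg_abs_le _) hpos
  -- D bound
  have hrD : D ≤ γ 0 / 2 * r := by
    have h1 : 2 * (D + 1) / γ 0 ≤ r := le_trans (le_max_right _ _) hr
    have h2 : 2 * (D + 1) ≤ γ 0 * r := by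
      rw [div_le_iff₀ hγ] at h1; nlinarith
    linarith
  have hsplit : r ^ q = r * r ^ (q - 1) := by
    rw [← Real.rpow_one_add' hr0.le (by linarith)]
    ring_nf
  have hq1 : (0:ℝ) ≤ r ^ (q - 1) := (Real.rpow_pos_of_pos hr0 _).le
  have hDr : D * r ^ (q - 1) ≤ γ 0 / 2 * r ^ q := by
    rw [hsplit]
    calc D * r ^ (q - 1) ≤ (γ 0 / 2 * r) * r ^ (q - 1) := mul_le_mul_of_nonneg_right hrD hq1
      _ = γ 0 / 2 * (r * r ^ (q - 1)) := by ring
  have hzero : γ 0 * r ^ (q - (0:ℝ)) = γ 0 * r ^ q := by norm_num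
  push_cast
  rw [hzero]
  have := add_le_add hbeta hsum
  rw [hD] at hDr
  nlinarith [this, hDr]

def Efac (m : ℕ) (a : Fin m → ℂ) (r : ℝ) : ℂ :=
  rayPow r 0 (-(rmC m a)) * Complex.exp (Sfun m a r 0)

lemma abs_Efac (m : ℕ) (a : Fin m → ℂ) {r : ℝ} (hr : 0 < r) :
    ‖Efac m a r‖ =
      Real.exp ((-(rmC m a)).re * Real.log r +
        ∑ k ∈ Finset.range ((m+1)/2+1),
          (2 * bcoef m a k / ((m : ℂ) + 2 - 2 * (k:ℂ))).re * r ^ (((m:ℝ)+2)/2 - (k:ℝ))) := by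
  rw [Efac, norm_mul, Complex.norm_exp, rayPow, Complex.norm_exp, ← Real.exp_add]
  congr 1
  congr 1
  · simp [Complex.mul_re]
  · rw [Sfun, Complex.re_sum]
    refine Finset.sum_congr rfl fun k hk => ?_
    rw [rayPow]
    have h1 : (((m:ℂ)+2-2*(k:ℂ))/2) * ((Real.log r : ℂ) + (0:ℝ) * Complex.I)
        = (((((m:ℝ)+2)/2 - (k:ℝ)) * Real.log r : ℝ) : ℂ) := by push_cast; ring
    rw [h1, ← Complex.ofReal_exp]
    rw [show Real.exp ((((m:ℝ)+2)/2 - (k:ℝ)) * Real.log r) = r ^ (((m:ℝ)+2)/2 - (k:ℝ)) from by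
      rw [Real.rpow_def_of_pos hr, mul_comm]]
    simp [Complex.mul_re]

lemma Efac_big (m : ℕ) (hm : 1 ≤ m) (a : Fin m → ℂ) :
    ∃ c > 0, ∃ T : ℝ, 1 ≤ T ∧ ∀ r : ℝ, T ≤ r →
      Real.exp (c * r ^ (((m:ℝ)+2)/2)) ≤ ‖Efac m a r‖ := by
  obtain ⟨c, hc, T, hT1, hT⟩ := gen_lower ((m+1)/2)
      (fun k => (2 * bcoef m a k / ((m:ℂ)+2-2*(k:ℂ))).re) ((-(rmC m a)).re) (((m:ℝ)+2)/2)
      (by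
        have : (1:ℝ) ≤ (m:ℝ) := by exact_mod_cast hm
        linarith)
      (by
        simp only [bcoef]
        rw [show (2:ℂ) * 1 / ((m:ℂ)+2-2*((0:ℕ):ℂ)) = ((2/((m:ℝ)+2) : ℝ) : ℂ) by push_cast; ring]
        rw [Complex.ofReal_re]
        positivity)
  refine ⟨c, hc, T, hT1, fun r hr => ?_⟩
  rw [abs_Efac m a (lt_of_lt_of_le one_pos (hT1.trans hr))]
  exact Real.exp_le_exp.2 (hT r hr)

lemma decay (m : ℕ) (hm : 1 ≤ m) {c : ℝ} (hc : 0 < c) (n : ℕ) :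
    Filter.Tendsto (fun r : ℝ => r ^ n * Real.exp (-(c * r ^ (((m:ℝ)+2)/2))))
      Filter.atTop (nhds 0) := by
  set q : ℝ := ((m:ℝ)+2)/2 with hqdef
  have hq1 : (1:ℝ) ≤ q := by
    have : (1:ℝ) ≤ (m:ℝ) := by exact_mod_cast hm
    rw [hqdef]; linarith
  have hg : Filter.Tendsto (fun r : ℝ => c * r ^ q) Filter.atTop Filter.atTop :=
    (tendsto_rpow_atTop (by linarith)).const_mul_atTop hc
  have h0 : Filter.Tendsto (fun r : ℝ => (c⁻¹)^n * ((c * r ^ q) ^ n * Real.exp (-(c * r ^ q))))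
      Filter.atTop (nhds 0) := by
    have := (tendsto_pow_mul_exp_neg_atTop_nhds_zero n).comp hg
    simpa using this.const_mul ((c⁻¹)^n)
  apply squeeze_zero' (g := fun r : ℝ => (c⁻¹)^n * ((c * r ^ q) ^ n * Real.exp (-(c * r ^ q))))
      ?_ ?_ h0
  · filter_upwards [Filter.eventually_ge_atTop (1:ℝ)] with r hr
    positivity
  · filter_upwards [Filter.eventually_ge_atTop (1:ℝ)] with r hr
    have hr0 : (0:ℝ) < r := lt_of_lt_of_le one_pos hr
    have h1 : r ≤ r ^ q := by
      nth_rewrite 1 [← Real.rpow_one r]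
      exact Real.rpow_le_rpow_of_exponent_le hr hq1
    have h2 : r ^ n ≤ (r ^ q) ^ n := pow_le_pow_left₀ hr0.le h1 n
    have h3 : (c⁻¹)^n * ((c * r ^ q) ^ n * Real.exp (-(c * r ^ q)))
        = (r ^ q) ^ n * Real.exp (-(c * r ^ q)) := by
      rw [mul_pow, ← mul_assoc, ← mul_assoc, ← mul_pow, inv_mul_cancel₀ hc.ne', one_pow, one_mul]
    rw [h3]
    exact mul_le_mul_of_nonneg_right h2 (Real.exp_nonneg _)

lemma deriv_entire {u : ℂ → ℂ} (hu : Differentiable ℂ u) : Differentiable ℂ (deriv u) :=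
  Complex.analyticOnNhd_univ_iff_differentiable.mp
    ((Complex.analyticOnNhd_univ_iff_differentiable.mpr hu).deriv)

lemma deriv_bound {u : ℂ → ℂ} (hu : Differentiable ℂ u) (r M : ℝ)
    (hM : ∀ t : ℝ, t ∈ Set.Icc r (r+1) → ‖deriv (deriv u) (t:ℂ)‖ ≤ M) :
    ‖deriv u (r:ℂ)‖ ≤ ‖u ((r:ℂ)+1)‖ + ‖u (r:ℂ)‖ + M := by
  have hu1 : Differentiable ℂ (deriv u) := deriv_entire hu
  have hu2 : Differentiable ℂ (deriv (deriv u)) := deriv_entire hu1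
  have hM0 : 0 ≤ M := le_trans (norm_nonneg _) (hM r ⟨le_refl r, by linarith⟩)
  have hc2 : Continuous (fun t : ℝ => deriv (deriv u) (t:ℂ)) :=
    hu2.continuous.comp Complex.continuous_ofReal
  have hc1 : Continuous (fun t : ℝ => deriv u (t:ℂ)) :=
    hu1.continuous.comp Complex.continuous_ofReal
  have key : ∀ s ∈ Set.Icc r (r+1), ‖deriv u (s:ℂ) - deriv u (r:ℂ)‖ ≤ M := by
    intro s hs
    have hftc : ∫ t in r..s, deriv (deriv u) (t:ℂ) = deriv u (s:ℂ) - deriv u (r:ℂ) :=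
      intervalIntegral.integral_eq_sub_of_hasDerivAt
        (fun x _ => ((hu1 (x:ℂ)).hasDerivAt).comp_ofReal)
        (hc2.intervalIntegrable r s)
    rw [← hftc]
    have hb : ∀ x ∈ Set.uIoc r s, ‖deriv (deriv u) (x:ℂ)‖ ≤ M := by
      intro x hx
      rw [Set.uIoc_of_le hs.1] at hx
      exact hM x ⟨hx.1.le, le_trans hx.2 hs.2⟩
    calc ‖∫ t in r..s, deriv (deriv u) (t:ℂ)‖ ≤ M * |s - r| :=
          intervalIntegral.norm_integral_le_of_norm_le_const hb
      _ ≤ M * 1 := by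
          apply mul_le_mul_of_nonneg_left _ hM0
          rw [_root_.abs_of_nonneg (by linarith [hs.1])]
          linarith [hs.2]
      _ = M := mul_one M
  have hint : ∫ s in r..(r+1), deriv u (s:ℂ) = u ((r+1:ℝ):ℂ) - u (r:ℂ) :=
    intervalIntegral.integral_eq_sub_of_hasDerivAt
      (fun x _ => ((hu (x:ℂ)).hasDerivAt).comp_ofReal)
      (hc1.intervalIntegrable r (r+1))
  have hdiff : deriv u (r:ℂ) - (u ((r+1:ℝ):ℂ) - u (r:ℂ))
      = ∫ s in r..(r+1), (deriv u (r:ℂ) - deriv u (s:ℂ)) := by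
    rw [intervalIntegral.integral_sub (intervalIntegrable_const) (hc1.intervalIntegrable r (r+1)),
      hint, intervalIntegral.integral_const]
    simp
  have hnorm : ‖deriv u (r:ℂ) - (u ((r+1:ℝ):ℂ) - u (r:ℂ))‖ ≤ M := by
    rw [hdiff]
    have hb : ∀ x ∈ Set.uIoc r (r+1), ‖deriv u (r:ℂ) - deriv u (x:ℂ)‖ ≤ M := by
      intro x hx
      rw [Set.uIoc_of_le (by linarith)] at hx
      rw [norm_sub_rev]
      exact key x ⟨hx.1.le, hx.2⟩
    calc ‖∫ s in r..(r+1), (deriv u (r:ℂ) - deriv u (s:ℂ))‖ ≤ M * |r + 1 - r| :=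
          intervalIntegral.norm_integral_le_of_norm_le_const hb
      _ = M := by rw [show r + 1 - r = (1:ℝ) by ring, abs_one, mul_one]
  have hcast : ((r+1:ℝ):ℂ) = (r:ℂ) + 1 := by push_cast; ring
  rw [hcast] at hnorm
  calc ‖deriv u (r:ℂ)‖
      = ‖(deriv u (r:ℂ) - (u ((r:ℂ)+1) - u (r:ℂ))) + (u ((r:ℂ)+1) - u (r:ℂ))‖ := by ring_nf
    _ ≤ ‖deriv u (r:ℂ) - (u ((r:ℂ)+1) - u (r:ℂ))‖ + ‖u ((r:ℂ)+1) - u (r:ℂ)‖ := norm_add_le _ _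
    _ ≤ M + (‖u ((r:ℂ)+1)‖ + ‖u (r:ℂ)‖) := add_le_add hnorm (norm_sub_le _ _)
    _ = ‖u ((r:ℂ)+1)‖ + ‖u (r:ℂ)‖ + M := by ring

lemma Efac_ne (m : ℕ) (a : Fin m → ℂ) (r : ℝ) : Efac m a r ≠ 0 :=
  mul_ne_zero (Complex.exp_ne_zero _) (Complex.exp_ne_zero _)

lemma sib_unique (m : ℕ) (hm : 1 ≤ m) (a : Fin m → ℂ) (Φ Ψ : ℂ → ℂ)
    (hΦd : Differentiable ℂ Φ) (hΨd : Differentiable ℂ Ψ)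
    (hΦode : ∀ X, deriv (deriv Φ) X = pot m a X * Φ X)
    (hΨode : ∀ X, deriv (deriv Ψ) X = pot m a X * Ψ X)
    (hΦa : Filter.Tendsto (fun r : ℝ => Φ r * Efac m a r) Filter.atTop (nhds 1))
    (hΨa : Filter.Tendsto (fun r : ℝ => Ψ r * Efac m a r) Filter.atTop (nhds 1)) :
    ∀ X, Φ X = Ψ X := by
  obtain ⟨c, hc, T, hT1, hT⟩ := Efac_big m hm a
  set q : ℝ := ((m:ℝ)+2)/2 with hqdef
  have hq0 : 0 ≤ q := by positivity
  -- inverse of Efac tends to 0, with explicit bound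
  have hEinv : ∀ r : ℝ, T ≤ r → ‖(Efac m a r)⁻¹‖ ≤ Real.exp (-(c * r ^ q)) := by
    intro r hr
    rw [norm_inv, Real.exp_neg]
    exact inv_anti₀ (Real.exp_pos _) (hT r hr)
  have hEinv0 : Filter.Tendsto (fun r : ℝ => (Efac m a r)⁻¹) Filter.atTop (nhds 0) := by
    apply squeeze_zero_norm' (a := fun r : ℝ => Real.exp (-(c * r ^ q)))
    · filter_upwards [Filter.eventually_ge_atTop T] with r hr using hEinv r hr
    · have := decay m hm hc 0
      simpa using this
  set F : ℂ → ℂ := fun X => Φ X - Ψ X with hFdef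
  have hFd : Differentiable ℂ F := hΦd.sub hΨd
  have hFa : Filter.Tendsto (fun r : ℝ => F r * Efac m a r) Filter.atTop (nhds 0) := by
    have := hΦa.sub hΨa
    rw [sub_self] at this
    refine this.congr (fun r => ?_)
    simp only [hFdef]; ring
  -- limits of the functions themselves along the real axis
  have hlim0 : ∀ (u : ℂ → ℂ) (L : ℂ),
      Filter.Tendsto (fun r : ℝ => u r * Efac m a r) Filter.atTop (nhds L) →
      Filter.Tendsto (fun r : ℝ => u r) Filter.atTop (nhds 0) := by
    intro u L hu
    have := hu.mul hEinv0
    rw [mul_zero] at this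
    refine this.congr (fun r => ?_)
    rw [mul_assoc, mul_inv_cancel₀ (Efac_ne m a r), mul_one]
  have hΦ0 := hlim0 Φ 1 hΦa
  have hF0 := hlim0 F 0 hFa
  -- uniform norm bounds
  have hΦb : ∀ᶠ r : ℝ in Filter.atTop, ‖Φ r * Efac m a r‖ ≤ 2 :=
    hΦa.norm.eventually_le_const (by norm_num)
  have hFb : ∀ᶠ r : ℝ in Filter.atTop, ‖F r * Efac m a r‖ ≤ 2 :=
    hFa.norm.eventually_le_const (by norm_num)
  -- potential bound
  set Ca : ℝ := 1 + ∑ k : Fin m, ‖a k‖ with hCa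
  have hCa0 : 0 ≤ Ca := by
    rw [hCa]
    have : (0:ℝ) ≤ ∑ k : Fin m, ‖a k‖ := Finset.sum_nonneg fun k _ => norm_nonneg _
    linarith
  have hVb : ∀ t : ℝ, 1 ≤ t → ‖pot m a t‖ ≤ Ca * t ^ m := by
    intro t ht
    have ht0 : (0:ℝ) ≤ t := by linarith
    have hnt : ‖(t:ℂ)‖ = t := by rw [Complex.norm_real, Real.norm_of_nonneg ht0]
    calc ‖pot m a t‖ ≤ ‖(t:ℂ) ^ m‖ + ‖∑ k : Fin m, a k * (t:ℂ) ^ (m - 1 - (k:ℕ))‖ :=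
          norm_add_le _ _
      _ ≤ t ^ m + ∑ k : Fin m, ‖a k‖ * t ^ m := by
          gcongr
          · rw [norm_pow, hnt]
          · calc ‖∑ k : Fin m, a k * (t:ℂ) ^ (m - 1 - (k:ℕ))‖
                ≤ ∑ k : Fin m, ‖a k * (t:ℂ) ^ (m - 1 - (k:ℕ))‖ := norm_sum_le _ _
              _ ≤ ∑ k : Fin m, ‖a k‖ * t ^ m := by
                  apply Finset.sum_le_sum
                  intro k _
                  rw [norm_mul, norm_pow, hnt]
                  exact mul_le_mul_of_nonneg_left
                    (pow_le_pow_right₀ ht (Nat.sub_le _ _ |>.trans (Nat.sub_le _ _))) (norm_nonneg _)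
      _ = Ca * t ^ m := by rw [hCa, ← Finset.sum_mul]; ring
  -- derivative limits
  have hderiv0 : ∀ (u : ℂ → ℂ), Differentiable ℂ u →
      (∀ X, deriv (deriv u) X = pot m a X * u X) →
      (∀ᶠ r : ℝ in Filter.atTop, ‖u r * Efac m a r‖ ≤ 2) →
      Filter.Tendsto (fun r : ℝ => u r) Filter.atTop (nhds 0) →
      Filter.Tendsto (fun r : ℝ => deriv u r) Filter.atTop (nhds 0) := by
    intro u hud hode hub hu0
    obtain ⟨R₀, hR₀⟩ := Filter.eventually_atTop.mp hub
    set R₁ : ℝ := max (max R₀ T) 1 with hR₁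
    -- pointwise bound for ‖u t‖
    have hup : ∀ t : ℝ, R₁ ≤ t → ‖u t‖ ≤ 2 * Real.exp (-(c * t ^ q)) := by
      intro t ht
      have h1 : ‖u t‖ = ‖u t * Efac m a t‖ * ‖(Efac m a t)⁻¹‖ := by
        rw [← norm_mul, mul_assoc, mul_inv_cancel₀ (Efac_ne m a t), mul_one]
      rw [h1]
      apply mul_le_mul (hR₀ t (le_trans (le_trans (le_max_left _ _) (le_max_left _ _)) ht))
        (hEinv t (le_trans (le_trans (le_max_right _ _) (le_max_left _ _)) ht))
        (norm_nonneg _) (by norm_num)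
    set Cb : ℝ := Ca * 2 ^ m * 2 with hCb
    apply squeeze_zero_norm'
      (a := fun r : ℝ => ‖u ((r:ℂ) + 1)‖ + ‖u r‖ + Cb * (r ^ m * Real.exp (-(c * r ^ q))))
    · filter_upwards [Filter.eventually_ge_atTop R₁, Filter.eventually_ge_atTop (1:ℝ)]
        with r hr hr1
      apply deriv_bound hud
      intro t htt
      have ht1 : (1:ℝ) ≤ t := le_trans hr1 htt.1
      have htq : r ^ q ≤ t ^ q := Real.rpow_le_rpow (by linarith) htt.1 hq0
      rw [hode]
      rw [norm_mul]
      calc ‖pot m a t‖ * ‖u t‖ ≤ (Ca * t ^ m) * (2 * Real.exp (-(c * t ^ q))) := by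
            apply mul_le_mul (hVb t ht1) (hup t (le_trans hr htt.1)) (norm_nonneg _)
            positivity
        _ ≤ (Ca * (2 ^ m * r ^ m)) * (2 * Real.exp (-(c * r ^ q))) := by
            have h2 : t ^ m ≤ (2*r) ^ m := pow_le_pow_left₀ (by linarith) (by linarith [htt.2]) m
            rw [mul_pow] at h2
            have h3 : Real.exp (-(c * t ^ q)) ≤ Real.exp (-(c * r ^ q)) := by
              apply Real.exp_le_exp.2
              simp only [neg_le_neg_iff]
              exact mul_le_mul_of_nonneg_left htq hc.le
            apply mul_le_mul (by gcongr) (by linarith) (by positivity) (by positivity)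
        _ = Cb * (r ^ m * Real.exp (-(c * r ^ q))) := by rw [hCb]; ring
    · have h1 : Filter.Tendsto (fun r : ℝ => ‖u ((r:ℂ) + 1)‖) Filter.atTop (nhds 0) := by
        have h2 : Filter.Tendsto (fun r : ℝ => r + 1) Filter.atTop Filter.atTop :=
          Filter.tendsto_atTop_add_const_right _ 1 Filter.tendsto_id
        have h3 := (hu0.comp h2).norm
        rw [norm_zero] at h3
        refine h3.congr (fun r => ?_)
        simp only [Function.comp]
        norm_num
      have h4 := hu0.norm
      rw [norm_zero] at h4
      have h5 := (decay m hm hc m).const_mul Cb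
      rw [mul_zero] at h5
      have := (h1.add h4).add h5
      simpa using this
  have hΦ'0 := hderiv0 Φ hΦd hΦode hΦb hΦ0
  -- ODE for F
  have hΦd1 : Differentiable ℂ (deriv Φ) := deriv_entire hΦd
  have hΨd1 : Differentiable ℂ (deriv Ψ) := deriv_entire hΨd
  have hFd1 : Differentiable ℂ (deriv F) := deriv_entire hFd
  have hderivF : ∀ X, deriv F X = deriv Φ X - deriv Ψ X := by
    intro X
    exact deriv_sub (hΦd X) (hΨd X)
  have hFode : ∀ X, deriv (deriv F) X = pot m a X * F X := by
    intro X
    have h1 : deriv F = fun Y => deriv Φ Y - deriv Ψ Y := funext hderivF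
    rw [h1, deriv_fun_sub (hΦd1 X) (hΨd1 X), hΦode X, hΨode X]
    simp only [hFdef]
    ring
  have hF'0 := hderiv0 F hFd hFode hFb hF0
  -- Wronskian
  set W : ℂ → ℂ := fun X => F X * deriv Φ X - deriv F X * Φ X with hWdef
  have hWd : Differentiable ℂ W := (hFd.mul hΦd1).sub (hFd1.mul hΦd)
  have hW' : ∀ X, deriv W X = 0 := by
    intro X
    have h1 : HasDerivAt W (deriv F X * deriv Φ X + F X * deriv (deriv Φ) X -
        (deriv (deriv F) X * Φ X + deriv F X * deriv Φ X)) X :=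
      (((hFd X).hasDerivAt.mul (hΦd1 X).hasDerivAt).sub
        ((hFd1 X).hasDerivAt.mul (hΦd X).hasDerivAt))
    rw [h1.deriv, hΦode X, hFode X]
    ring
  have hWlim : Filter.Tendsto (fun r : ℝ => W r) Filter.atTop (nhds 0) := by
    have := (hF0.mul hΦ'0).sub (hF'0.mul hΦ0)
    simpa using this
  have hW0 : ∀ X, W X = 0 := by
    intro X
    have h1 : (fun r : ℝ => W r) = fun _ : ℝ => W X :=
      funext fun r => is_const_of_deriv_eq_zero hWd hW' _ _
    rw [h1] at hWlim
    exact tendsto_nhds_unique tendsto_const_nhds hWlim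
  -- Φ is nonvanishing on the real axis, eventually
  have hΦne : ∀ᶠ r : ℝ in Filter.atTop, Φ r ≠ 0 := by
    have h1 : ∀ᶠ r : ℝ in Filter.atTop, (1:ℝ)/2 < ‖Φ r * Efac m a r‖ := by
      apply hΦa.norm.eventually_const_lt
      norm_num
    filter_upwards [h1] with r hr h0
    rw [h0, zero_mul, norm_zero] at hr
    linarith
  obtain ⟨R₃, hR₃⟩ := Filter.eventually_atTop.mp hΦne
  -- the quotient F/Φ is constant on [R₃, ∞)
  set g : ℝ → ℂ := fun t => F t / Φ t with hgdef
  have hgconst : ∀ x : ℝ, R₃ ≤ x → g x = g R₃ := by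
    intro x hx
    have hcont : ContinuousOn g (Set.Icc R₃ x) := by
      apply ContinuousOn.div
      · exact (hFd.continuous.comp Complex.continuous_ofReal).continuousOn
      · exact (hΦd.continuous.comp Complex.continuous_ofReal).continuousOn
      · intro t ht
        exact hR₃ t ht.1
    have hderiv : ∀ t ∈ Set.Ico R₃ x, HasDerivWithinAt g 0 (Set.Ici t) t := by
      intro t ht
      have hF' : HasDerivAt (fun s : ℝ => F s) (deriv F t) t :=
        ((hFd (t:ℂ)).hasDerivAt).comp_ofReal
      have hΦ' : HasDerivAt (fun s : ℝ => Φ s) (deriv Φ t) t :=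
        ((hΦd (t:ℂ)).hasDerivAt).comp_ofReal
      have hdiv := hF'.div hΦ' (hR₃ t ht.1)
      have h0 : (deriv F t * Φ t - F t * deriv Φ t) / (Φ (t:ℂ)) ^ 2 = 0 := by
        have := hW0 (t:ℂ)
        simp only [hWdef] at this
        rw [show deriv F (t:ℂ) * Φ t - F t * deriv Φ t = -(F (t:ℂ) * deriv Φ t - deriv F t * Φ t) by ring,
          this]
        simp
      rw [h0] at hdiv
      exact hdiv.hasDerivWithinAt
    exact constant_of_has_deriv_right_zero hcont hderiv x ⟨hx, le_refl x⟩
  -- g tends to 0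
  have hglim : Filter.Tendsto g Filter.atTop (nhds 0) := by
    have h1 := hFa.div hΦa one_ne_zero
    rw [zero_div] at h1
    refine h1.congr (fun r => ?_)
    show F (r:ℂ) * Efac m a r / (Φ (r:ℂ) * Efac m a r) = g r
    rw [mul_div_mul_right _ _ (Efac_ne m a r)]
  -- hence g is constantly 0, so F vanishes on [R₃, ∞)
  have hgR : g R₃ = 0 := by
    have h2 : (fun _ : ℝ => g R₃) =ᶠ[Filter.atTop] g := by
      filter_upwards [Filter.eventually_ge_atTop R₃] with r hr
      exact (hgconst r hr).symm
    have h1 : Filter.Tendsto g Filter.atTop (nhds (g R₃)) :=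
      Filter.Tendsto.congr' h2 tendsto_const_nhds
    exact tendsto_nhds_unique h1 hglim
  have hFzero : ∀ x : ℝ, R₃ ≤ x → F (x:ℂ) = 0 := by
    intro x hx
    have h1 : g x = 0 := by rw [hgconst x hx, hgR]
    rcases div_eq_zero_iff.mp h1 with h | h
    · exact h
    · exact absurd h (hR₃ x hx)
  -- identity theorem
  have hFan : AnalyticOnNhd ℂ F Set.univ := Complex.analyticOnNhd_univ_iff_differentiable.mpr hFd
  have hseq : Filter.Tendsto (fun n : ℕ => ((R₃ + 1 + 1/((n:ℝ)+1) : ℝ) : ℂ)) Filter.atTop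
      (nhdsWithin ((R₃ + 1 : ℝ) : ℂ) {((R₃ + 1 : ℝ) : ℂ)}ᶜ) := by
    apply tendsto_nhdsWithin_of_tendsto_nhds_of_eventually_within
    · have h2 : Filter.Tendsto (fun n : ℕ => (R₃ + 1 + 1/((n:ℝ)+1) : ℝ)) Filter.atTop
          (nhds (R₃ + 1)) := by
        have := tendsto_one_div_add_atTop_nhds_zero_nat (𝕜 := ℝ)
        have h3 := this.const_add (R₃ + 1)
        simpa using h3
      exact (Complex.continuous_ofReal.tendsto _).comp h2
    · apply Filter.Eventually.of_forall
      intro n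
      simp only [Set.mem_compl_iff, Set.mem_singleton_iff]
      intro hcon
      have := Complex.ofReal_injective hcon
      have hpos : (0:ℝ) < 1/((n:ℝ)+1) := by positivity
      linarith
  have hfreq : ∃ᶠ z in nhdsWithin ((R₃ + 1 : ℝ) : ℂ) {((R₃ + 1 : ℝ) : ℂ)}ᶜ, F z = 0 := by
    apply hseq.frequently
    apply Filter.Eventually.frequently
    apply Filter.Eventually.of_forall
    intro n
    apply hFzero
    have hpos : (0:ℝ) < 1/((n:ℝ)+1) := by positivity
    linarith
  have hFall : F = fun _ => 0 :=
    hFan.eq_of_frequently_eq analyticOnNhd_const hfreq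
  intro X
  have := congrFun hFall X
  simp only [hFdef] at this
  exact sub_eq_zero.mp this

/-- the canonical Sibuya solution satisfies
`conj(Φ₀(X, a)) = Φ₀(conj X, conj a)`. -/
theorem stmt4 (m : ℕ) (hm : 1 ≤ m)
    (Φ₀ : ℂ × (Fin m → ℂ) → ℂ)
    (hent : Differentiable ℂ Φ₀)
    (hode : ∀ a : Fin m → ℂ, ∀ X : ℂ,
      -(deriv (deriv fun Y => Φ₀ (Y, a)) X) + pot m a X * Φ₀ (X, a) = 0)
    (hasym : ∀ a : Fin m → ℂ, SibAsymp m a fun X => Φ₀ (X, a))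
    (X : ℂ) (a : Fin m → ℂ) :
    (starRingEnd ℂ) (Φ₀ (X, a)) =
      Φ₀ ((starRingEnd ℂ) X, fun j => (starRingEnd ℂ) (a j)) := by
  set ab : Fin m → ℂ := fun j => (starRingEnd ℂ) (a j) with hab
  set Φc : ℂ → ℂ := fun Y => Φ₀ (Y, a) with hΦc
  set Φb : ℂ → ℂ := fun Y => Φ₀ (Y, ab) with hΦb
  set Ψc : ℂ → ℂ := fun Y => (starRingEnd ℂ) (Φb ((starRingEnd ℂ) Y)) with hΨc
  have hΦcd : Differentiable ℂ Φc :=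
    hent.comp (differentiable_id.prodMk (differentiable_const _))
  have hΦbd : Differentiable ℂ Φb :=
    hent.comp (differentiable_id.prodMk (differentiable_const _))
  have hΨder : ∀ Y, HasDerivAt Ψc ((starRingEnd ℂ) (deriv Φb ((starRingEnd ℂ) Y))) Y :=
    fun Y => conj_hasDerivAt (hΦbd _).hasDerivAt
  have hΨcd : Differentiable ℂ Ψc := fun Y => (hΨder Y).differentiableAt
  have hΨderiv : deriv Ψc = fun Y => (starRingEnd ℂ) (deriv Φb ((starRingEnd ℂ) Y)) :=
    funext fun Y => (hΨder Y).deriv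
  have hΦbd1 : Differentiable ℂ (deriv Φb) := deriv_entire hΦbd
  have hΨder2 : ∀ Y, deriv (deriv Ψc) Y
      = (starRingEnd ℂ) (deriv (deriv Φb) ((starRingEnd ℂ) Y)) := by
    intro Y
    rw [hΨderiv]
    exact (conj_hasDerivAt (hΦbd1 _).hasDerivAt).deriv
  -- ODEs
  have hΦode : ∀ Y, deriv (deriv Φc) Y = pot m a Y * Φc Y := by
    intro Y
    have h := hode a Y
    linear_combination -h
  have hΦbode : ∀ Y, deriv (deriv Φb) Y = pot m ab Y * Φb Y := by
    intro Y
    have h := hode ab Y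
    linear_combination -h
  have hΨode : ∀ Y, deriv (deriv Ψc) Y = pot m a Y * Ψc Y := by
    intro Y
    rw [hΨder2, hΦbode, map_mul, pot_conj m a Y]
  -- asymptotics at θ = 0
  have hθ : |(0:ℝ)| < 3 * Real.pi / (m + 2) := by
    rw [abs_zero]
    positivity
  have hΦa : Filter.Tendsto (fun r : ℝ => Φc r * Efac m a r) Filter.atTop (nhds 1) := by
    have h := hasym a 0 hθ
    refine h.congr (fun r => ?_)
    rw [rayPt_zero, Efac, mul_assoc]
  have hconjE : ∀ r : ℝ, (starRingEnd ℂ) (Efac m ab r) = Efac m a r := by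
    intro r
    rw [Efac, Efac, map_mul, rayPow_zero_conj, ← Complex.exp_conj, Sfun_zero_conj m a r]
    congr 2
    rw [map_neg, hab, rmC_conj m a, Complex.conj_conj]
  have hΨa : Filter.Tendsto (fun r : ℝ => Ψc r * Efac m a r) Filter.atTop (nhds 1) := by
    have h := hasym ab 0 hθ
    have h2 := (Complex.continuous_conj.tendsto 1).comp h
    rw [show (starRingEnd ℂ) (1:ℂ) = 1 from map_one _] at h2
    refine h2.congr (fun r => ?_)
    simp only [Function.comp]
    rw [rayPt_zero, mul_assoc, map_mul]
    rw [show ((rayPow r 0 (-(rmC m ab))) * Complex.exp (Sfun m ab r 0)) = Efac m ab r from rfl]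
    rw [hconjE r]
    congr 1
    rw [hΨc]
    simp only []
    rw [Complex.conj_ofReal]
  have := sib_unique m hm a Φc Ψc hΦcd hΨcd hΦode hΨode hΦa hΨa X
  rw [hΦc] at this
  simp only [] at this
  rw [this, hΨc]
  simp only []
  rw [Complex.conj_conj]
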